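/- Error bound for the calculus product approximation: with f, g C³ on B(x⁰, Δ̄) with Hessian Lipschitz constants L_f, L_g, sample set X of radius Δ < Δ̄ with S of full rank (row or column), U = span S, and ∇ᶜᶜ(fg)(X) := f(x⁰)∇ᶜg(X) + g(x⁰)∇ᶜf(X), one has ‖∇ᶜᶜ(fg)(X) − ∇(fg)_U(x⁰)‖ ≤ (√m/6)(L_g|f(x⁰)| + L_f|g(x⁰)|)‖(Ŝᵀ)†‖Δ². -/

import Mathlib

open Metric Matrix

/-- `B` is the Moore–Penrose pseudoinverse of `A`: the four Penrose equations. -/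
def IsMPInv {n m : Type*} [Fintype n] [Fintype m]
    (A : Matrix n m ℝ) (B : Matrix m n ℝ) : Prop :=
  A * B * A = A ∧ B * A * B = B ∧ (A * B)ᵀ = A * B ∧ (B * A)ᵀ = B * A

/-- The ℓ²→ℓ² operator (spectral) norm of a real matrix. -/
noncomputable def opNorm {a b : ℕ} (A : Matrix (Fin a) (Fin b) ℝ) : ℝ :=
  ‖LinearMap.toContinuousLinearMap (Matrix.toEuclideanLin A)‖

open Set in
private lemma taylor_deriv_bound {E F : Type*} [NormedAddCommGroup E] [NormedSpace ℝ E]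
    [NormedAddCommGroup F] [NormedSpace ℝ F]
    {φ : E → F} {φ' : E → (E →L[ℝ] F)} {x v : E} {L : ℝ}
    (hd : ∀ s ∈ Set.Icc (0:ℝ) 1, HasFDerivAt φ (φ' (x + s • v)) (x + s • v))
    (hL : ∀ s ∈ Set.Icc (0:ℝ) 1, ‖φ' (x + s • v) - φ' x‖ ≤ L * (s * ‖v‖)) :
    ‖φ (x + v) - φ x - φ' x v‖ ≤ L * ‖v‖ ^ 2 / 2 := by
  set G : ℝ → F := fun s => φ (x + s • v) - φ x - s • (φ' x v) with hGdef
  have hGd : ∀ s ∈ Set.Icc (0:ℝ) 1,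
      HasDerivAt G (φ' (x + s • v) v - φ' x v) s := by
    intro s hs
    have h1 : HasDerivAt (fun s : ℝ => x + s • v) v s := by
      simpa using ((hasDerivAt_id s).smul_const v).const_add x
    have h2 : HasDerivAt (fun s : ℝ => φ (x + s • v)) (φ' (x + s • v) v) s :=
      (hd s hs).comp_hasDerivAt s h1
    exact ((h2.sub_const (φ x)).sub ((hasDerivAt_id s).smul_const (φ' x v))).congr_deriv (by simp)
  have hB : ∀ t : ℝ, HasDerivAt (fun t => L * ‖v‖ ^ 2 * t ^ 2 / 2) (L * ‖v‖ ^ 2 * t) t := by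
    intro t
    have := ((hasDerivAt_pow 2 t).const_mul (L * ‖v‖ ^ 2)).div_const 2
    exact this.congr_deriv (by ring)
  have key := image_norm_le_of_norm_deriv_right_le_deriv_boundary
    (f := G) (f' := fun s => φ' (x + s • v) v - φ' x v) (a := 0) (b := 1)
    (fun s hs => ((hGd s hs).continuousAt).continuousWithinAt)
    (fun s hs => ((hGd s (Ico_subset_Icc_self hs)).hasDerivWithinAt))
    (by simp [hGdef]) hB
    (fun s hs => by
      have h1 : ‖φ' (x + s • v) v - φ' x v‖ ≤ ‖φ' (x + s • v) - φ' x‖ * ‖v‖ := by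
        simpa using (φ' (x + s • v) - φ' x).le_opNorm v
      have h2 := hL s (Ico_subset_Icc_self hs)
      calc ‖φ' (x + s • v) v - φ' x v‖ ≤ ‖φ' (x + s • v) - φ' x‖ * ‖v‖ := h1
        _ ≤ L * (s * ‖v‖) * ‖v‖ := by
            apply mul_le_mul_of_nonneg_right h2 (norm_nonneg v)
        _ = L * ‖v‖ ^ 2 * s := by ring)
  have := key (right_mem_Icc.2 zero_le_one)
  simpa [hGdef] using this

open Set in
private lemma central_diff_bound' {E : Type*} [NormedAddCommGroup E] [NormedSpace ℝ E]
    {h : E → ℝ} {h₂ : E → (E →L[ℝ] (E →L[ℝ] ℝ))} {x v : E} {L R : ℝ}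
    (h1 : ∀ y ∈ ball x R, HasFDerivAt h (fderiv ℝ h y) y)
    (h2 : ∀ y ∈ ball x R, HasFDerivAt (fderiv ℝ h) (h₂ y) y)
    (hL : ∀ y ∈ ball x R, ‖h₂ y - h₂ x‖ ≤ L * ‖y - x‖)
    (hv : ‖v‖ < R) :
    |(h (x + v) - h (x - v)) / 2 - fderiv ℝ h x v| ≤ L * ‖v‖ ^ 3 / 6 := by
  have hmem : ∀ w : E, ‖w‖ ≤ ‖v‖ → x + w ∈ ball x R := by
    intro w hw
    rw [mem_ball_iff_norm, add_sub_cancel_left]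
    exact lt_of_le_of_lt hw hv
  set c : ℝ := fderiv ℝ h x v with hc
  set ψ : ℝ → ℝ := fun t => h (x + t • v) - h (x - t • v) - (2 * t) * c with hψdef
  -- derivative of ψ
  have hψd : ∀ t ∈ Set.Icc (0:ℝ) 1,
      HasDerivAt ψ (fderiv ℝ h (x + t • v) v + fderiv ℝ h (x - t • v) v - 2 * c) t := by
    intro t ht
    have htv : ‖t • v‖ ≤ ‖v‖ := by
      rw [norm_smul, Real.norm_eq_abs, abs_of_nonneg ht.1]
      nlinarith [norm_nonneg v, ht.2]
    have hmemp : x + t • v ∈ ball x R := hmem _ htv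
    have hmemm : x - t • v ∈ ball x R := by
      have := hmem (-(t • v)) (by simpa using htv)
      simpa [sub_eq_add_neg] using this
    have hgp : HasDerivAt (fun t : ℝ => x + t • v) v t := by
      simpa using ((hasDerivAt_id t).smul_const v).const_add x
    have hgm : HasDerivAt (fun t : ℝ => x - t • v) (-v) t := by
      simpa using ((hasDerivAt_id t).smul_const v).const_sub x
    have hA : HasDerivAt (fun t : ℝ => h (x + t • v)) (fderiv ℝ h (x + t • v) v) t :=
      (h1 _ hmemp).comp_hasDerivAt t hgp
    have hB : HasDerivAt (fun t : ℝ => h (x - t • v)) (-(fderiv ℝ h (x - t • v) v)) t := by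
      have := (h1 _ hmemm).comp_hasDerivAt t hgm
      simpa [Function.comp_def] using this
    have hC : HasDerivAt (fun t : ℝ => (2 * t) * c) (2 * c) t := by
      simpa using ((hasDerivAt_id t).const_mul 2).mul_const c
    have := (hA.sub hB).sub hC
    exact this.congr_deriv (by ring)
  -- bound on the derivative
  have hψbound : ∀ t ∈ Set.Icc (0:ℝ) 1,
      |fderiv ℝ h (x + t • v) v + fderiv ℝ h (x - t • v) v - 2 * c| ≤ L * ‖v‖ ^ 3 * t ^ 2 := by
    intro t ht
    have htnn : (0:ℝ) ≤ t := ht.1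
    have htv : ‖t • v‖ ≤ ‖v‖ := by
      rw [norm_smul, Real.norm_eq_abs, abs_of_nonneg htnn]
      nlinarith [norm_nonneg v, ht.2]
    have key : ∀ w : E, ‖w‖ ≤ ‖v‖ →
        ‖fderiv ℝ h (x + w) - fderiv ℝ h x - h₂ x w‖ ≤ L * ‖w‖ ^ 2 / 2 := by
      intro w hw
      refine taylor_deriv_bound (φ := fderiv ℝ h) (φ' := h₂) ?_ ?_
      · intro s hs
        refine h2 _ (hmem _ ?_)
        rw [norm_smul, Real.norm_eq_abs, abs_of_nonneg hs.1]
        nlinarith [norm_nonneg w, hs.2, hw]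
      · intro s hs
        have := hL _ (hmem (s • w) (by
          rw [norm_smul, Real.norm_eq_abs, abs_of_nonneg hs.1]
          nlinarith [norm_nonneg w, hs.2, hw]))
        simpa [add_sub_cancel_left, norm_smul, Real.norm_eq_abs, abs_of_nonneg hs.1,
          mul_assoc] using this
    have kp := key (t • v) htv
    have km := key (-(t • v)) (by simpa using htv)
    -- turn into scalar bounds by applying to v
    have ap1 : |fderiv ℝ h (x + t • v) v - c - t * (h₂ x v v)| ≤ L * ‖t • v‖ ^ 2 / 2 * ‖v‖ := by
      have happ : ‖(fderiv ℝ h (x + t • v) - fderiv ℝ h x - h₂ x (t • v)) v‖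
          ≤ ‖fderiv ℝ h (x + t • v) - fderiv ℝ h x - h₂ x (t • v)‖ * ‖v‖ :=
        ContinuousLinearMap.le_opNorm _ v
      have := happ.trans (mul_le_mul_of_nonneg_right kp (norm_nonneg v))
      simpa [hc, ContinuousLinearMap.sub_apply, ContinuousLinearMap.map_smul,
        Real.norm_eq_abs, smul_eq_mul] using this
    have am1 : |fderiv ℝ h (x - t • v) v - c + t * (h₂ x v v)| ≤ L * ‖t • v‖ ^ 2 / 2 * ‖v‖ := by
      have happ : ‖(fderiv ℝ h (x + -(t • v)) - fderiv ℝ h x - h₂ x (-(t • v))) v‖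
          ≤ ‖fderiv ℝ h (x + -(t • v)) - fderiv ℝ h x - h₂ x (-(t • v))‖ * ‖v‖ :=
        ContinuousLinearMap.le_opNorm _ v
      have := happ.trans (mul_le_mul_of_nonneg_right km (norm_nonneg v))
      simpa [hc, sub_eq_add_neg, ContinuousLinearMap.sub_apply, ContinuousLinearMap.map_smul,
        ContinuousLinearMap.neg_apply, ContinuousLinearMap.map_neg,
        Real.norm_eq_abs, smul_eq_mul] using this
    have hnv : ‖t • v‖ ^ 2 = t ^ 2 * ‖v‖ ^ 2 := by
      rw [norm_smul, Real.norm_eq_abs, abs_of_nonneg htnn]; ring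
    rw [hnv] at ap1 am1
    have := abs_add_le _ _ |>.trans (add_le_add ap1 am1)
    calc |fderiv ℝ h (x + t • v) v + fderiv ℝ h (x - t • v) v - 2 * c|
        = |(fderiv ℝ h (x + t • v) v - c - t * (h₂ x v v))
            + (fderiv ℝ h (x - t • v) v - c + t * (h₂ x v v))| := by ring_nf
      _ ≤ L * (t ^ 2 * ‖v‖ ^ 2) / 2 * ‖v‖ + L * (t ^ 2 * ‖v‖ ^ 2) / 2 * ‖v‖ := this
      _ = L * ‖v‖ ^ 3 * t ^ 2 := by ring
  -- boundary function
  have hBd : ∀ t : ℝ, HasDerivAt (fun t => L * ‖v‖ ^ 3 * t ^ 3 / 3) (L * ‖v‖ ^ 3 * t ^ 2) t := by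
    intro t
    have := ((hasDerivAt_pow 3 t).const_mul (L * ‖v‖ ^ 3)).div_const 3
    exact this.congr_deriv (by ring)
  have key := image_norm_le_of_norm_deriv_right_le_deriv_boundary
    (f := ψ) (f' := fun t => fderiv ℝ h (x + t • v) v + fderiv ℝ h (x - t • v) v - 2 * c)
    (a := 0) (b := 1)
    (fun t ht => ((hψd t ht).continuousAt).continuousWithinAt)
    (fun t ht => ((hψd t (Ico_subset_Icc_self ht)).hasDerivWithinAt))
    (by simp [hψdef]) hBd
    (fun t ht => by
      simpa [Real.norm_eq_abs] using hψbound t (Ico_subset_Icc_self ht))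
  have h1' := key (right_mem_Icc.2 zero_le_one)
  have hψ1 : ψ 1 = h (x + v) - h (x - v) - 2 * c := by simp [hψdef]
  rw [Real.norm_eq_abs, hψ1] at h1'
  have : (h (x + v) - h (x - v)) / 2 - c = (h (x + v) - h (x - v) - 2 * c) / 2 := by ring
  rw [hc] at this ⊢
  rw [this, abs_div]
  rw [abs_of_nonneg (by norm_num : (0:ℝ) ≤ 2)]
  linarith

set_option maxHeartbeats 2000000 in
/-- Error bound for the GCSCG product approximation
`∇ᶜᶜ(fg)(X) = f(x⁰)∇ᶜg(X) + g(x⁰)∇ᶜf(X)`: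
`‖∇ᶜᶜ(fg)(X) − ∇(fg)_U(x⁰)‖ ≤ (√m/6)(L_g|f(x⁰)| + L_f|g(x⁰)|)‖(Ŝᵀ)†‖Δ²`,
where `∇(fg)_U(x⁰) = Proj_U ∇(fg)(x⁰)` with `Proj_U = (Sᵀ)†Sᵀ`. -/
theorem gcscg_product_error_bound {n m : ℕ}
    (f g : EuclideanSpace ℝ (Fin n) → ℝ)
    (x₀ : EuclideanSpace ℝ (Fin n)) (Δbar Lf Lg Δ : ℝ)
    (hf : ContDiffOn ℝ 3 f (ball x₀ Δbar)) (hg : ContDiffOn ℝ 3 g (ball x₀ Δbar))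
    (hLf : ∀ x ∈ ball x₀ Δbar, ∀ y ∈ ball x₀ Δbar,
      ‖fderiv ℝ (fderiv ℝ f) x - fderiv ℝ (fderiv ℝ f) y‖ ≤ Lf * ‖x - y‖)
    (hLg : ∀ x ∈ ball x₀ Δbar, ∀ y ∈ ball x₀ Δbar,
      ‖fderiv ℝ (fderiv ℝ g) x - fderiv ℝ (fderiv ℝ g) y‖ ≤ Lg * ‖x - y‖)
    (d : Fin m → EuclideanSpace ℝ (Fin n))
    (hΔ : ∀ i, ‖d i‖ ≤ Δ) (hΔpos : 0 < Δ) (hΔbar : Δ < Δbar)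
    (S : Matrix (Fin n) (Fin m) ℝ) (hS : S = Matrix.of fun j i => d i j)
    (hrank : S.rank = m ∨ S.rank = n)
    (P : Matrix (Fin n) (Fin m) ℝ) (hP : IsMPInv Sᵀ P) :
    ‖(WithLp.equiv 2 (Fin n → ℝ)).symm fun j =>
        (f x₀ • P.mulVec (fun i => (g (x₀ + d i) - g (x₀ - d i)) / 2) +
          g x₀ • P.mulVec fun i => (f (x₀ + d i) - f (x₀ - d i)) / 2) j -
          (P * Sᵀ).mulVec
            (WithLp.equiv 2 (Fin n → ℝ) (gradient (fun y => f y * g y) x₀)) j‖ ≤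
      Real.sqrt m / 6 * (Lg * |f x₀| + Lf * |g x₀|) * opNorm (Δ • P) * Δ ^ 2 := by
  have hΔbar0 : 0 < Δbar := hΔpos.trans hΔbar
  have hx₀ : x₀ ∈ ball x₀ Δbar := mem_ball_self hΔbar0
  -- case n = 0
  rcases Nat.eq_zero_or_pos n with hn | hn
  · subst hn
    have hv : (WithLp.equiv 2 (Fin 0 → ℝ)).symm (fun j =>
        (f x₀ • P.mulVec (fun i => (g (x₀ + d i) - g (x₀ - d i)) / 2) +
          g x₀ • P.mulVec fun i => (f (x₀ + d i) - f (x₀ - d i)) / 2) j -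
          (P * Sᵀ).mulVec
            (WithLp.equiv 2 (Fin 0 → ℝ) (gradient (fun y => f y * g y) x₀)) j) = 0 :=
      Subsingleton.elim _ _
    have hP0 : (LinearMap.toContinuousLinearMap (Matrix.toEuclideanLin (Δ • P))) = 0 :=
      Subsingleton.elim _ _
    have hz : opNorm (Δ • P) = 0 := by unfold opNorm; rw [hP0, norm_zero]
    rw [hv, norm_zero, hz]
    simp
  -- differentiability facts
  have hball : IsOpen (ball x₀ Δbar) := isOpen_ball
  have hf1 : ∀ y ∈ ball x₀ Δbar, HasFDerivAt f (fderiv ℝ f y) y := fun y hy =>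
    ((hf.contDiffAt (hball.mem_nhds hy)).differentiableAt (by norm_num)).hasFDerivAt
  have hg1 : ∀ y ∈ ball x₀ Δbar, HasFDerivAt g (fderiv ℝ g y) y := fun y hy =>
    ((hg.contDiffAt (hball.mem_nhds hy)).differentiableAt (by norm_num)).hasFDerivAt
  have hf2 : ∀ y ∈ ball x₀ Δbar,
      HasFDerivAt (fderiv ℝ f) (fderiv ℝ (fderiv ℝ f) y) y := fun y hy =>
    (((hf.contDiffAt (hball.mem_nhds hy)).fderiv_right (m := 2)
      (by norm_num)).differentiableAt (by norm_num)).hasFDerivAt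
  have hg2 : ∀ y ∈ ball x₀ Δbar,
      HasFDerivAt (fderiv ℝ g) (fderiv ℝ (fderiv ℝ g) y) y := fun y hy =>
    (((hg.contDiffAt (hball.mem_nhds hy)).fderiv_right (m := 2)
      (by norm_num)).differentiableAt (by norm_num)).hasFDerivAt
  -- nonnegativity of Lipschitz constants
  have hLf0 : 0 ≤ Lf := by
    set y : EuclideanSpace ℝ (Fin n) := x₀ + EuclideanSpace.single ⟨0, hn⟩ (Δ / 2) with hy
    have hyd : ‖y - x₀‖ = Δ / 2 := by
      rw [hy, add_sub_cancel_left, EuclideanSpace.norm_single, Real.norm_eq_abs,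
        abs_of_pos (by linarith)]
    have hymem : y ∈ ball x₀ Δbar := by
      rw [mem_ball_iff_norm, hyd]; linarith
    have := le_trans (by positivity) (hLf y hymem x₀ hx₀)
    rw [hyd] at this
    nlinarith
  have hLg0 : 0 ≤ Lg := by
    set y : EuclideanSpace ℝ (Fin n) := x₀ + EuclideanSpace.single ⟨0, hn⟩ (Δ / 2) with hy
    have hyd : ‖y - x₀‖ = Δ / 2 := by
      rw [hy, add_sub_cancel_left, EuclideanSpace.norm_single, Real.norm_eq_abs,
        abs_of_pos (by linarith)]
    have hymem : y ∈ ball x₀ Δbar := by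
      rw [mem_ball_iff_norm, hyd]; linarith
    have := le_trans (by positivity) (hLg y hymem x₀ hx₀)
    rw [hyd] at this
    nlinarith
  -- central difference bounds
  have hEf : ∀ i, |(f (x₀ + d i) - f (x₀ - d i)) / 2 - fderiv ℝ f x₀ (d i)|
      ≤ Lf * Δ ^ 3 / 6 := by
    intro i
    have := central_diff_bound' hf1 hf2 (fun y hy => hLf y hy x₀ hx₀)
      (lt_of_le_of_lt (hΔ i) hΔbar)
    refine this.trans ?_
    have h1 : ‖d i‖ ^ 3 ≤ Δ ^ 3 := pow_le_pow_left₀ (norm_nonneg _) (hΔ i) 3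
    have h2 := mul_le_mul_of_nonneg_left h1 hLf0
    linarith
  have hEg : ∀ i, |(g (x₀ + d i) - g (x₀ - d i)) / 2 - fderiv ℝ g x₀ (d i)|
      ≤ Lg * Δ ^ 3 / 6 := by
    intro i
    have := central_diff_bound' hg1 hg2 (fun y hy => hLg y hy x₀ hx₀)
      (lt_of_le_of_lt (hΔ i) hΔbar)
    refine this.trans ?_
    have h1 : ‖d i‖ ^ 3 ≤ Δ ^ 3 := pow_le_pow_left₀ (norm_nonneg _) (hΔ i) 3
    have h2 := mul_le_mul_of_nonneg_left h1 hLg0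
    linarith
  -- gradient / matrix identities
  set u : Fin n → ℝ := WithLp.equiv 2 (Fin n → ℝ) (gradient (fun y => f y * g y) x₀) with hu
  have hSu : ∀ i, (Sᵀ *ᵥ u) i
      = f x₀ * (fderiv ℝ g x₀ (d i)) + g x₀ * (fderiv ℝ f x₀ (d i)) := by
    intro i
    have hfd : fderiv ℝ (fun y => f y * g y) x₀
        = f x₀ • fderiv ℝ g x₀ + g x₀ • fderiv ℝ f x₀ :=
      fderiv_mul ((hf1 x₀ hx₀).differentiableAt) ((hg1 x₀ hx₀).differentiableAt)
    have hinner : (Sᵀ *ᵥ u) i = inner ℝ (gradient (fun y => f y * g y) x₀) (d i) := by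
      rw [hS]
      simp [Matrix.mulVec, dotProduct, PiLp.inner_apply, hu, RCLike.inner_apply,
        mul_comm, -inner_gradient_left]
    rw [hinner]
    have := InnerProductSpace.toDual_symm_apply (𝕜 := ℝ)
      (E := EuclideanSpace ℝ (Fin n)) (x := d i)
      (y := fderiv ℝ (fun y => f y * g y) x₀)
    rw [gradient, this, hfd]
    simp
  set err : Fin m → ℝ := fun i =>
    f x₀ * ((g (x₀ + d i) - g (x₀ - d i)) / 2 - fderiv ℝ g x₀ (d i)) +
    g x₀ * ((f (x₀ + d i) - f (x₀ - d i)) / 2 - fderiv ℝ f x₀ (d i)) with herr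
  have hvec : (fun j =>
        (f x₀ • P.mulVec (fun i => (g (x₀ + d i) - g (x₀ - d i)) / 2) +
          g x₀ • P.mulVec fun i => (f (x₀ + d i) - f (x₀ - d i)) / 2) j -
          (P * Sᵀ).mulVec u j) = P *ᵥ err := by
    funext j
    have : err = (f x₀ • fun i => (g (x₀ + d i) - g (x₀ - d i)) / 2) +
        (g x₀ • fun i => (f (x₀ + d i) - f (x₀ - d i)) / 2) - Sᵀ *ᵥ u := by
      funext i
      simp [herr, hSu i, Pi.smul_apply, smul_eq_mul]
      ring
    rw [this, Matrix.mulVec_sub, Matrix.mulVec_add, Matrix.mulVec_smul, Matrix.mulVec_smul,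
      ← Matrix.mulVec_mulVec]
    simp
  rw [hvec]
  -- norm bounds
  set c : ℝ := (Lg * |f x₀| + Lf * |g x₀|) * Δ ^ 3 / 6 with hcdef
  have hc0 : 0 ≤ c := by positivity
  have herrb : ∀ i, |err i| ≤ c := by
    intro i
    calc |err i| ≤ |f x₀| * |(g (x₀ + d i) - g (x₀ - d i)) / 2 - fderiv ℝ g x₀ (d i)|
          + |g x₀| * |(f (x₀ + d i) - f (x₀ - d i)) / 2 - fderiv ℝ f x₀ (d i)| := by
            rw [herr]
            refine (abs_add_le _ _).trans ?_
            rw [abs_mul, abs_mul]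
      _ ≤ |f x₀| * (Lg * Δ ^ 3 / 6) + |g x₀| * (Lf * Δ ^ 3 / 6) := by
            gcongr
            · exact hEg i
            · exact hEf i
      _ = c := by rw [hcdef]; ring
  have hnormerr : ‖(WithLp.equiv 2 (Fin m → ℝ)).symm err‖ ≤ Real.sqrt m * c := by
    rw [EuclideanSpace.norm_eq]
    have hsum : ∑ i, ‖((WithLp.equiv 2 (Fin m → ℝ)).symm err) i‖ ^ 2 ≤ m * c ^ 2 := by
      calc ∑ i, ‖((WithLp.equiv 2 (Fin m → ℝ)).symm err) i‖ ^ 2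
          ≤ ∑ _i : Fin m, c ^ 2 := by
            refine Finset.sum_le_sum fun i _ => ?_
            have : ‖((WithLp.equiv 2 (Fin m → ℝ)).symm err) i‖ = |err i| := by
              simp [Real.norm_eq_abs]
            rw [this]
            exact pow_le_pow_left₀ (abs_nonneg _) (herrb i) 2
        _ = m * c ^ 2 := by simp [mul_comm]
    calc Real.sqrt (∑ i, ‖((WithLp.equiv 2 (Fin m → ℝ)).symm err) i‖ ^ 2)
        ≤ Real.sqrt (m * c ^ 2) := Real.sqrt_le_sqrt hsum
      _ = Real.sqrt m * c := by
          rw [Real.sqrt_mul (Nat.cast_nonneg m), Real.sqrt_sq hc0]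
  have hopP : ‖(WithLp.equiv 2 (Fin n → ℝ)).symm (P *ᵥ err)‖
      ≤ opNorm P * (Real.sqrt m * c) := by
    have h1 : (WithLp.equiv 2 (Fin n → ℝ)).symm (P *ᵥ err)
        = Matrix.toEuclideanLin P ((WithLp.equiv 2 (Fin m → ℝ)).symm err) :=
      (Matrix.toEuclideanLin_apply_piLp_toLp P err).symm
    rw [h1]
    calc ‖Matrix.toEuclideanLin P ((WithLp.equiv 2 (Fin m → ℝ)).symm err)‖
        = ‖(LinearMap.toContinuousLinearMap (Matrix.toEuclideanLin P))
            ((WithLp.equiv 2 (Fin m → ℝ)).symm err)‖ := by rw [LinearMap.coe_toContinuousLinearMap']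
      _ ≤ opNorm P * ‖(WithLp.equiv 2 (Fin m → ℝ)).symm err‖ :=
          ContinuousLinearMap.le_opNorm _ _
      _ ≤ opNorm P * (Real.sqrt m * c) := by
          exact mul_le_mul_of_nonneg_left hnormerr (norm_nonneg _)
  refine hopP.trans ?_
  have hop : opNorm (Δ • P) = Δ * opNorm P := by
    have hsm : ‖Δ • LinearMap.toContinuousLinearMap (Matrix.toEuclideanLin P)‖
        = ‖Δ‖ * ‖LinearMap.toContinuousLinearMap (Matrix.toEuclideanLin P)‖ :=
      norm_smul Δ (LinearMap.toContinuousLinearMap (Matrix.toEuclideanLin P))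
    unfold opNorm
    rw [_root_.map_smul, _root_.map_smul, hsm, Real.norm_eq_abs, abs_of_pos hΔpos]
  rw [hop, hcdef]
  exact le_of_eq (by ring)
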